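/- Let C be an M(ℕ)-category and let f : x → y be a morphism between finitely supported objects of C. If u and v in M(ℕ) agree on supp(x) ∪ supp(y), then u • x = v • x, u • y = v • y, and u_*(f) = v_*(f) as morphisms from u • x to u • y. -/

import Mathlib

open CategoryTheory

/-- The monoid of injective self-maps of `U`, under composition. -/
def Minj (U : Type*) : Submonoid (Function.End U) where
  carrier := {f | Function.Injective f}
  mul_mem' := fun hf hg => hf.comp hg
  one_mem' := Function.injective_id

instance (U : Type*) : FunLike (Minj U) U U where
  coe u := u.1
  coe_injective := fun _ _ h => Subtype.ext h

@[simp] lemma Minj.mul_apply {U : Type*} (u v : Minj U) (a : U) : (u * v) a = u (v a) := rfl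

/-- `x` is supported on `A` if every injection fixing `A` elementwise fixes `x`. -/
def Supported {U : Type*} {X : Type*} [MulAction (Minj U) X] (A : Set U) (x : X) : Prop :=
  ∀ u : Minj U, (∀ a ∈ A, u a = a) → u • x = x

/-- `x` is finitely supported if it is supported on some finite subset of `U`. -/
def FinSupported {U : Type*} {X : Type*} [MulAction (Minj U) X] (x : X) : Prop :=
  ∃ A : Finset U, Supported (A : Set U) x

/-- The support of `x`: the intersection of all finite subsets of `U` on which `x`
is supported. -/
def supp {U : Type*} {X : Type*} [MulAction (Minj U) X] (x : X) : Set U :=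
  {i : U | ∀ A : Finset U, Supported (A : Set U) x → i ∈ A}

/-- An `M(U)`-category: a category with an action of the injection monoid on objects,
together with coherent isomorphisms `ι u x : x ≅ u • x`. The action of `u` on morphisms
is then given by conjugation with these isomorphisms. -/
structure MCat (U : Type*) (C : Type*) [Category C] [MulAction (Minj U) C] where
  ι : ∀ (u : Minj U) (x : C), x ≅ u • x
  ι_mul : ∀ (u v : Minj U) (x : C),
    (ι u x).hom ≫ (ι v (u • x)).hom = (ι (v * u) x).hom ≫ eqToHom (mul_smul v u x)

namespace MCat

variable {U : Type*} {C : Type*} [Category C] [MulAction (Minj U) C]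

/-- The action `u_*` of an injection on morphisms: `u_*(f) = ι(u,y) ∘ f ∘ ι(u,x)⁻¹`. -/
def act (h : MCat U C) (u : Minj U) {x y : C} (f : x ⟶ y) : u • x ⟶ u • y :=
  (h.ι u x).inv ≫ f ≫ (h.ι u y).hom

/-- The natural isomorphism `[v,u]^x := ι(v,x) ∘ ι(u,x)⁻¹ : u • x ⟶ v • x`. -/
def tw (h : MCat U C) (v u : Minj U) (x : C) : u • x ⟶ v • x :=
  (h.ι u x).inv ≫ (h.ι v x).hom

@[simp] lemma act_id (h : MCat U C) (u : Minj U) (x : C) : h.act u (𝟙 x) = 𝟙 (u • x) := by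
  simp [act]

@[simp] lemma act_comp (h : MCat U C) (u : Minj U) {x y z : C} (f : x ⟶ y) (g : y ⟶ z) :
    h.act u (f ≫ g) = h.act u f ≫ h.act u g := by
  simp [act]

lemma ι_natural (h : MCat U C) (u : Minj U) {x y : C} (f : x ⟶ y) :
    (h.ι u x).hom ≫ h.act u f = f ≫ (h.ι u y).hom := by
  simp [act]

end MCat

section Aux

/-- Bundle a permutation as an element of `Minj ℕ`. -/
def permMinj (π : Equiv.Perm ℕ) : Minj ℕ := ⟨(π : ℕ → ℕ), π.injective⟩

@[simp] lemma permMinj_apply (π : Equiv.Perm ℕ) (a : ℕ) : permMinj π a = π a := rfl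

lemma permMinj_mul_inv (π : Equiv.Perm ℕ) : permMinj π * permMinj π⁻¹ = 1 := by
  apply Subtype.ext
  funext a
  show π (π⁻¹ a) = a
  simp

lemma permMinj_inv_mul (π : Equiv.Perm ℕ) : permMinj π⁻¹ * permMinj π = 1 := by
  apply Subtype.ext
  funext a
  show π⁻¹ (π a) = a
  simp

/-- Any injective map on a finite set extends to a permutation of `ℕ`. -/
lemma exists_perm_extend (A : Finset ℕ) (g : ℕ → ℕ) (hg : Set.InjOn g ↑A) :
    ∃ π : Equiv.Perm ℕ, ∀ a ∈ A, π a = g a := by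
  classical
  induction A using Finset.induction_on with
  | empty => exact ⟨1, by simp⟩
  | @insert a S ha ih =>
    obtain ⟨π, hπ⟩ := ih (hg.mono (by norm_cast; exact Finset.subset_insert a S))
    refine ⟨π * Equiv.swap a (π⁻¹ (g a)), ?_⟩
    intro s hs
    rcases Finset.mem_insert.mp hs with rfl | hsS
    · simp [Equiv.Perm.mul_apply]
    · have hsa : s ≠ a := fun h => ha (h ▸ hsS)
      have hsb : s ≠ π⁻¹ (g a) := by
        intro h
        have h2 : π s = g a := by rw [h]; simp
        rw [hπ s hsS] at h2
        exact hsa (hg (by simp [hsS]) (by simp) h2)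
      rw [Equiv.Perm.mul_apply, Equiv.swap_apply_of_ne_of_ne hsa hsb, hπ s hsS]

variable {X : Type*} [MulAction (Minj ℕ) X]

/-- If two injections agree on a (finite) support of `x`, their actions on `x` agree. -/
lemma smul_eq_of_agree {A : Finset ℕ} {x : X} (hA : Supported (U := ℕ) (↑A) x)
    {u v : Minj ℕ} (huv : ∀ a ∈ A, u a = v a) : u • x = v • x := by
  obtain ⟨π, hπ⟩ := exists_perm_extend A u (fun a _ b _ hab => u.2 hab)
  have hu : (permMinj π⁻¹ * u) • x = x := by
    apply hA
    intro a haA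
    simp only [Minj.mul_apply, permMinj_apply]
    rw [← hπ a (Finset.mem_coe.mp haA)]
    simp
  have hv : (permMinj π⁻¹ * v) • x = x := by
    apply hA
    intro a haA
    simp only [Minj.mul_apply, permMinj_apply]
    rw [← huv a (Finset.mem_coe.mp haA), ← hπ a (Finset.mem_coe.mp haA)]
    simp
  calc u • x = (permMinj π * (permMinj π⁻¹ * u)) • x := by
        rw [← mul_assoc, permMinj_mul_inv, one_mul]
    _ = permMinj π • ((permMinj π⁻¹ * u) • x) := mul_smul _ _ _
    _ = permMinj π • ((permMinj π⁻¹ * v) • x) := by rw [hu, hv]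
    _ = (permMinj π * (permMinj π⁻¹ * v)) • x := (mul_smul _ _ _).symm
    _ = v • x := by rw [← mul_assoc, permMinj_mul_inv, one_mul]

end Aux
section Aux2

variable {X : Type*} [MulAction (Minj ℕ) X]

/-- Supports are closed under intersection. -/
lemma supported_inter {A B : Finset ℕ} {x : X} (hA : Supported (U := ℕ) (↑A) x)
    (hB : Supported (U := ℕ) (↑B) x) : Supported (U := ℕ) (↑(A ∩ B)) x := by
  classical
  intro u hu
  -- a fresh finite set `F`, disjoint from everything relevant
  set Bad : Finset ℕ := A ∪ B ∪ A.image (⇑u) with hBad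
  obtain ⟨F, hFsub, hFcard⟩ :=
    (Bad.finite_toSet.infinite_compl).exists_subset_card_eq (B \ A).card
  have hFBad : ∀ m ∈ F, m ∉ Bad := by
    intro m hm hc
    exact hFsub (Finset.mem_coe.mpr hm) (Finset.mem_coe.mpr hc)
  let e : {n // n ∈ B \ A} ≃ {n // n ∈ F} := Finset.equivOfCardEq hFcard.symm
  set g : ℕ → ℕ := fun n => if hn : n ∈ B \ A then ((e ⟨n, hn⟩ : {n // n ∈ F}) : ℕ) else n
    with hg
  have hgF : ∀ n (hn : n ∈ B \ A), g n ∈ F := by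
    intro n hn
    simp only [hg, dif_pos hn]
    exact (e ⟨n, hn⟩).2
  have hgid : ∀ n, n ∉ B \ A → g n = n := by
    intro n hn; simp only [hg, dif_neg hn]
  have hABBad : ∀ n, n ∈ A ∪ B → n ∈ Bad := fun n hn => Finset.mem_union_left _ hn
  have hginj : Set.InjOn g ↑(A ∪ B) := by
    intro n1 hn1 n2 hn2 heq
    by_cases h1 : n1 ∈ B \ A <;> by_cases h2 : n2 ∈ B \ A
    · simp only [hg, dif_pos h1, dif_pos h2] at heq
      exact congrArg Subtype.val (e.injective (Subtype.ext heq))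
    · exfalso
      have hn2F : n2 ∈ F := by rw [← hgid n2 h2, ← heq]; exact hgF n1 h1
      exact hFBad n2 hn2F (hABBad n2 (Finset.mem_coe.mp hn2))
    · exfalso
      have hn1F : n1 ∈ F := by rw [← hgid n1 h1, heq]; exact hgF n2 h2
      exact hFBad n1 hn1F (hABBad n1 (Finset.mem_coe.mp hn1))
    · rw [hgid n1 h1, hgid n2 h2] at heq; exact heq
  obtain ⟨π, hπ⟩ := exists_perm_extend (A ∪ B) g hginj
  have hπA : ∀ a ∈ A, π a = a := by
    intro a ha
    rw [hπ a (Finset.mem_union_left _ ha),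
      hgid a (fun hc => (Finset.mem_sdiff.mp hc).2 ha)]
  have hπx : permMinj π • x = x :=
    hA (permMinj π) (fun a ha => hπA a (Finset.mem_coe.mp ha))
  -- `x` is supported on `B' = π(B)`
  set B' : Finset ℕ := B.image (⇑π) with hB'def
  have hB' : Supported (U := ℕ) (↑B' : Set ℕ) x := by
    intro s hs
    have ht : (permMinj π⁻¹ * (s * permMinj π)) • x = x := by
      apply hB
      intro b hb
      have hπbB' : π b ∈ B' := Finset.mem_image_of_mem _ (Finset.mem_coe.mp hb)
      simp only [Minj.mul_apply, permMinj_apply]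
      rw [hs (π b) (Finset.mem_coe.mpr hπbB')]
      simp
    calc s • x = s • (permMinj π • x) := by rw [hπx]
      _ = (s * permMinj π) • x := (mul_smul _ _ _).symm
      _ = (permMinj π * (permMinj π⁻¹ * (s * permMinj π))) • x := by
            rw [← mul_assoc, permMinj_mul_inv, one_mul]
      _ = permMinj π • ((permMinj π⁻¹ * (s * permMinj π)) • x) := mul_smul _ _ _
      _ = permMinj π • x := by rw [ht]
      _ = x := hπx
  have hB'cases : ∀ b' ∈ B', b' ∈ F ∨ b' ∈ A ∩ B := by
    intro b' hb'
    obtain ⟨b, hb, rfl⟩ := Finset.mem_image.mp hb'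
    by_cases hbBA : b ∈ B \ A
    · left; rw [hπ b (Finset.mem_union_right _ hb)]; exact hgF b hbBA
    · right
      have hbA : b ∈ A := by
        by_contra hc
        exact hbBA (Finset.mem_sdiff.mpr ⟨hb, hc⟩)
      rw [hπA b hbA]
      exact Finset.mem_inter.mpr ⟨hbA, hb⟩
  have hFnotA : ∀ m ∈ F, m ∉ A := by
    intro m hm hc
    exact hFBad m hm (hABBad m (Finset.mem_union_left _ hc))
  set g2 : ℕ → ℕ := fun n => if n ∈ A then u n else n with hg2
  have huBad : ∀ a ∈ A, u a ∈ Bad :=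
    fun a ha => Finset.mem_union_right _ (Finset.mem_image_of_mem _ ha)
  have hB'F : ∀ n, n ∈ A ∪ B' → n ∉ A → n ∈ F := by
    intro n hn hnA
    rcases Finset.mem_union.mp hn with h | h
    · exact absurd h hnA
    · rcases hB'cases n h with h' | h'
      · exact h'
      · exact absurd (Finset.mem_inter.mp h').1 hnA
  have hg2inj : Set.InjOn g2 ↑(A ∪ B') := by
    intro n1 hn1 n2 hn2 heq
    by_cases h1 : n1 ∈ A <;> by_cases h2 : n2 ∈ A
    · simp only [hg2, if_pos h1, if_pos h2] at heq; exact u.2 heq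
    · exfalso
      have hn2F : n2 ∈ F := hB'F n2 (Finset.mem_coe.mp hn2) h2
      simp only [hg2, if_pos h1, if_neg h2] at heq
      exact hFBad n2 hn2F (heq ▸ huBad n1 h1)
    · exfalso
      have hn1F : n1 ∈ F := hB'F n1 (Finset.mem_coe.mp hn1) h1
      simp only [hg2, if_neg h1, if_pos h2] at heq
      exact hFBad n1 hn1F (heq ▸ huBad n2 h2)
    · simp only [hg2, if_neg h1, if_neg h2] at heq; exact heq
  obtain ⟨w, hw⟩ := exists_perm_extend (A ∪ B') g2 hg2inj
  have hwB' : ∀ b' ∈ B', w b' = b' := by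
    intro b' hb'
    rw [hw b' (Finset.mem_union_right _ hb')]
    rcases hB'cases b' hb' with hF' | hAB
    · simp only [hg2, if_neg (hFnotA b' hF')]
    · simp only [hg2, if_pos (Finset.mem_inter.mp hAB).1]
      exact hu b' (Finset.mem_coe.mpr hAB)
  have hwx : permMinj w • x = x :=
    hB' (permMinj w) (fun b' hb' => hwB' b' (Finset.mem_coe.mp hb'))
  have hagree : ∀ a ∈ A, u a = permMinj w a := by
    intro a ha
    rw [permMinj_apply, hw a (Finset.mem_union_left _ ha)]
    simp only [hg2, if_pos ha]
  rw [smul_eq_of_agree hA hagree, hwx]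

/-- A finitely supported element has a least finite support, contained in `supp`. -/
lemma exists_support_subset_supp {x : X} (hx : FinSupported (U := ℕ) x) :
    ∃ A : Finset ℕ, Supported (U := ℕ) (↑A) x ∧ ↑A ⊆ supp (U := ℕ) x := by
  classical
  obtain ⟨A0, hA0⟩ := hx
  have hP : ∃ n, ∃ A : Finset ℕ, A.card = n ∧ Supported (U := ℕ) (↑A) x :=
    ⟨A0.card, A0, rfl, hA0⟩
  obtain ⟨A, hAcard, hAsupp⟩ := Nat.find_spec hP
  refine ⟨A, hAsupp, ?_⟩
  intro a ha
  intro B hBsupp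
  have hABsupp := supported_inter hAsupp hBsupp
  have h1 : Nat.find hP ≤ (A ∩ B).card := Nat.find_min' hP ⟨A ∩ B, rfl, hABsupp⟩
  have h2 : A.card ≤ (A ∩ B).card := by rw [hAcard]; exact h1
  have hAB : A ∩ B = A := Finset.eq_of_subset_of_card_le Finset.inter_subset_left h2
  have hAsubB : A ⊆ B := by rw [← hAB]; exact Finset.inter_subset_right
  exact hAsubB (Finset.mem_coe.mp ha)

end Aux2
section Aux3

/-- The auxiliary injections used in the triviality argument: `c` embeds the complement
of `A` into fresh even slots, `t` into fresh odd slots, and `sbar` is the conjugate of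
`s` under `c`, extended by the identity. -/
lemma exists_conj_triple (A : Finset ℕ) (s : Minj ℕ) (hs : ∀ a ∈ A, s a = a) :
    ∃ c t sbar : Minj ℕ, (∀ a ∈ A, t a = c a) ∧ sbar * t = t ∧ sbar * c = c * s := by
  classical
  set N : ℕ := A.sup id + 1 with hN
  have haN : ∀ a ∈ A, a < N := fun a ha =>
    Nat.lt_succ_of_le (Finset.le_sup (f := id) ha)
  have hsnA : ∀ n, n ∉ A → s n ∉ A := by
    intro n hn hc
    have h1 : s (s n) = s n := hs _ hc
    have h2 : s n = n := s.2 h1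
    exact hn (h2 ▸ hc)
  set cf : ℕ → ℕ := fun n => if n ∈ A then n else 2 * n + 2 * N with hcf
  set tf : ℕ → ℕ := fun n => if n ∈ A then n else 2 * n + 1 + 2 * N with htf
  set cond : ℕ → Prop := fun m => m % 2 = 0 ∧ 2 * N ≤ m ∧ (m - 2 * N) / 2 ∉ A with hcond
  set sf : ℕ → ℕ := fun m => if cond m then 2 * (s ((m - 2 * N) / 2)) + 2 * N else m
    with hsf
  have hcondc : ∀ n, n ∉ A → cond (2 * n + 2 * N) ∧ (2 * n + 2 * N - 2 * N) / 2 = n := by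
    intro n hn
    have harith : (2 * n + 2 * N - 2 * N) / 2 = n := by omega
    exact ⟨⟨by omega, by omega, by rw [harith]; exact hn⟩, harith⟩
  have hcondA : ∀ m, m < 2 * N → ¬ cond m := fun m hm hc => by
    have := hc.2.1; omega
  have hcondt : ∀ n, ¬ cond (2 * n + 1 + 2 * N) := fun n hc => by
    have := hc.1; omega
  -- injectivity of cf
  have hcf_inj : Function.Injective cf := by
    intro n1 n2 heq
    by_cases m1 : n1 ∈ A <;> by_cases m2 : n2 ∈ A <;>
      simp only [hcf, if_pos, if_neg, m1, m2, if_true, if_false] at heq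
    · exact heq
    · exact absurd heq (by have := haN n1 m1; omega)
    · exact absurd heq (by have := haN n2 m2; omega)
    · omega
  have htf_inj : Function.Injective tf := by
    intro n1 n2 heq
    by_cases m1 : n1 ∈ A <;> by_cases m2 : n2 ∈ A <;>
      simp only [htf, if_pos, if_neg, m1, m2, if_true, if_false] at heq
    · exact heq
    · exact absurd heq (by have := haN n1 m1; omega)
    · exact absurd heq (by have := haN n2 m2; omega)
    · omega
  have hsf_cond : ∀ m, cond m → sf m = 2 * (s ((m - 2 * N) / 2)) + 2 * N := by
    intro m hm; simp only [hsf, if_pos hm]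
  have hsf_val_cond : ∀ m, cond m → cond (sf m) ∧ (sf m - 2 * N) / 2 = s ((m - 2 * N) / 2) := by
    intro m hm
    rw [hsf_cond m hm]
    exact (hcondc _ (hsnA _ hm.2.2))
  have hsf_inj : Function.Injective sf := by
    intro m1 m2 heq
    by_cases c1 : cond m1 <;> by_cases c2 : cond m2
    · rw [hsf_cond m1 c1, hsf_cond m2 c2] at heq
      have hseq : s ((m1 - 2 * N) / 2) = s ((m2 - 2 * N) / 2) := by omega
      have hq : (m1 - 2 * N) / 2 = (m2 - 2 * N) / 2 := s.2 hseq
      have e1 := c1.1; have e2 := c2.1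
      have l1 := c1.2.1; have l2 := c2.2.1
      omega
    · exfalso
      have h1 := (hsf_val_cond m1 c1).1
      rw [heq] at h1
      simp only [hsf, if_neg c2] at h1
      exact c2 h1
    · exfalso
      have h2 := (hsf_val_cond m2 c2).1
      rw [← heq] at h2
      simp only [hsf, if_neg c1] at h2
      exact c1 h2
    · simp only [hsf, if_neg c1, if_neg c2] at heq; exact heq
  refine ⟨⟨cf, hcf_inj⟩, ⟨tf, htf_inj⟩, ⟨sf, hsf_inj⟩, ?_, ?_, ?_⟩
  · intro a ha
    show tf a = cf a
    simp only [htf, hcf, if_pos ha]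
  · apply Subtype.ext
    funext n
    show sf (tf n) = tf n
    by_cases hn : n ∈ A
    · have h1 : tf n = n := by simp only [htf, if_pos hn]
      rw [h1]
      simp only [hsf, if_neg (hcondA n (by have := haN n hn; omega))]
    · have h1 : tf n = 2 * n + 1 + 2 * N := by simp only [htf, if_neg hn]
      rw [h1]
      simp only [hsf, if_neg (hcondt n)]
  · apply Subtype.ext
    funext n
    show sf (cf n) = cf (s n)
    by_cases hn : n ∈ A
    · have h1 : cf n = n := by simp only [hcf, if_pos hn]
      have h2 : s n = n := hs n hn
      rw [h1, h2, h1]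
      simp only [hsf, if_neg (hcondA n (by have := haN n hn; omega))]
    · have h1 : cf n = 2 * n + 2 * N := by simp only [hcf, if_neg hn]
      obtain ⟨hcnd, harith⟩ := hcondc n hn
      rw [h1, hsf_cond _ hcnd, harith]
      simp only [hcf, if_neg (hsnA n hn)]

end Aux3
section Aux4

variable {C : Type*} [Category C] [MulAction (Minj ℕ) C]

lemma MCat.ι_congr_obj (h : MCat ℕ C) (w : Minj ℕ) {x y : C} (e : x = y) :
    (h.ι w x).hom = eqToHom e ≫ (h.ι w y).hom ≫ eqToHom (by rw [e]) := by
  subst e; simp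

lemma MCat.ι_congr_mul (h : MCat ℕ C) {u w : Minj ℕ} (huw : u = w) (x : C) :
    (h.ι u x).hom = (h.ι w x).hom ≫ eqToHom (by rw [huw]) := by
  subst huw; simp

/-- If `s` fixes a finite support of `x` pointwise, then `ι s x` is an identity
(up to the object equality `x = s • x`). -/
lemma MCat.hom_triv (h : MCat ℕ C) {x : C} {A : Finset ℕ}
    (hA : Supported (U := ℕ) (↑A) x) {s : Minj ℕ} (hs : ∀ a ∈ A, s a = a) :
    ∃ e : x = s • x, (h.ι s x).hom = eqToHom e := by
  obtain ⟨c, t, sbar, hct, hst, hsc⟩ := exists_conj_triple A s hs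
  have hsx : s • x = x := hA s (fun a ha => hs a (Finset.mem_coe.mp ha))
  have htc : t • x = c • x :=
    smul_eq_of_agree hA (fun a ha => hct a ha)
  refine ⟨hsx.symm, ?_⟩
  -- Step 1: `ι sbar (t • x)` is an identity
  have e1 : t • x = sbar • (t • x) := by
    calc t • x = (sbar * t) • x := by rw [hst]
      _ = sbar • (t • x) := mul_smul _ _ _
  have key1 := h.ι_mul t sbar x
  rw [h.ι_congr_mul hst x] at key1
  simp only [Category.assoc, eqToHom_trans] at key1
  have h1 : (h.ι sbar (t • x)).hom = eqToHom e1 :=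
    (Iso.cancel_iso_hom_left (h.ι t x) _ _).mp key1
  -- transfer to `c • x`
  have e2 : c • x = sbar • (c • x) := by rw [← htc]; exact e1
  have h2 : (h.ι sbar (c • x)).hom = eqToHom e2 := by
    rw [h.ι_congr_obj sbar htc.symm, h1]
    simp [eqToHom_trans]
  -- Step 2: `ι (c * s) x` agrees with `ι c x`
  have e3 : c • x = (c * s) • x := by rw [mul_smul, hsx]
  have key2 := h.ι_mul c sbar x
  rw [h2, h.ι_congr_mul hsc x] at key2
  simp only [Category.assoc, eqToHom_trans] at key2
  have h3 : (h.ι (c * s) x).hom = (h.ι c x).hom ≫ eqToHom e3 := by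
    rw [eq_comm, comp_eqToHom_iff] at key2
    rw [key2]
    simp [eqToHom_trans]
  -- Step 3: conclude
  have key3 := h.ι_mul s c x
  rw [h3, h.ι_congr_obj c hsx] at key3
  simp only [Category.assoc, eqToHom_trans] at key3
  have key4 : ((h.ι s x).hom ≫ eqToHom hsx) ≫ (h.ι c x).hom
      ≫ eqToHom (show c • x = c • (s • x) by rw [hsx]) = 𝟙 x ≫ (h.ι c x).hom
      ≫ eqToHom (show c • x = c • (s • x) by rw [hsx]) := by
    simpa [Category.assoc] using key3
  rw [cancel_mono] at key4
  rw [comp_eqToHom_iff] at key4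
  simpa using key4

/-- If `u` and `v` agree on a finite support of `x`, then `ι u x` and `ι v x` agree. -/
lemma MCat.hom_agree (h : MCat ℕ C) {x : C} {A : Finset ℕ}
    (hA : Supported (U := ℕ) (↑A) x) {u v : Minj ℕ} (huv : ∀ a ∈ A, u a = v a) :
    ∃ e : u • x = v • x, (h.ι v x).hom = (h.ι u x).hom ≫ eqToHom e := by
  classical
  obtain ⟨π, hπ⟩ := exists_perm_extend A u (fun a _ b _ hab => u.2 hab)
  have hpu : ∀ a ∈ A, (permMinj π⁻¹ * u) a = a := by
    intro a ha
    simp only [Minj.mul_apply, permMinj_apply]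
    rw [← hπ a ha]
    simp
  have hpv : ∀ a ∈ A, (permMinj π⁻¹ * v) a = a := by
    intro a ha
    simp only [Minj.mul_apply, permMinj_apply]
    rw [← huv a ha, ← hπ a ha]
    simp
  have ex : u • x = v • x := smul_eq_of_agree hA huv
  obtain ⟨eu, hu⟩ := h.hom_triv hA hpu
  obtain ⟨ev, hv⟩ := h.hom_triv hA hpv
  refine ⟨ex, ?_⟩
  -- expand both triv equalities through ι_mul
  have keyu := h.ι_mul u (permMinj π⁻¹) x
  rw [hu] at keyu
  have keyv := h.ι_mul v (permMinj π⁻¹) x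
  rw [hv] at keyv
  -- rewrite ι (π⁻¹) (u • x) through the object equality ex
  rw [h.ι_congr_obj (permMinj π⁻¹) ex] at keyu
  -- keyu : (ι u x).hom ≫ eqToHom ex ≫ (ι π⁻¹ (v•x)).hom ≫ eqToHom _ = eqToHom _ ≫ eqToHom _
  -- keyv : (ι v x).hom ≫ (ι π⁻¹ (v•x)).hom = eqToHom _ ≫ eqToHom _
  simp only [Category.assoc, eqToHom_trans] at keyu keyv
  -- deduce: (ι v x).hom = (ι u x).hom ≫ eqToHom ex
  have q : permMinj π⁻¹ • (v • x) = permMinj π⁻¹ • (u • x) := by rw [ex]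
  have step : (h.ι v x).hom ≫ (h.ι (permMinj π⁻¹) (v • x)).hom ≫ eqToHom q
      = (h.ι u x).hom ≫ eqToHom ex ≫ (h.ι (permMinj π⁻¹) (v • x)).hom ≫ eqToHom q := by
    rw [keyu, ← Category.assoc, keyv]
    simp [eqToHom_trans]
  have step2 : (h.ι v x).hom ≫ ((h.ι (permMinj π⁻¹) (v • x)).hom ≫ eqToHom q)
      = ((h.ι u x).hom ≫ eqToHom ex) ≫ ((h.ι (permMinj π⁻¹) (v • x)).hom ≫ eqToHom q) := by
    simpa [Category.assoc] using step
  exact (cancel_mono _).mp step2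

end Aux4
/-- If `u` and `v` agree on `supp x ∪ supp y`, then `u • x = v • x`, `u • y = v • y`, and
`u_*(f) = v_*(f)` for every morphism `f : x ⟶ y`. -/
theorem stmt15 (C : Type*) [Category C] [MulAction (Minj ℕ) C] (h : MCat ℕ C)
    {x y : C} (f : x ⟶ y) (hx : FinSupported (U := ℕ) x) (hy : FinSupported (U := ℕ) y)
    (u v : Minj ℕ) (huv : ∀ a ∈ supp (U := ℕ) x ∪ supp (U := ℕ) y, u a = v a) :
    ∃ (ex : u • x = v • x) (ey : u • y = v • y),
      h.act u f = eqToHom ex ≫ h.act v f ≫ eqToHom ey.symm := by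
  obtain ⟨A, hAsupp, hAsub⟩ := exists_support_subset_supp hx
  obtain ⟨B, hBsupp, hBsub⟩ := exists_support_subset_supp hy
  have huvA : ∀ a ∈ A, u a = v a := fun a ha =>
    huv a (Set.mem_union_left _ (hAsub (Finset.mem_coe.mpr ha)))
  have huvB : ∀ a ∈ B, u a = v a := fun a ha =>
    huv a (Set.mem_union_right _ (hBsub (Finset.mem_coe.mpr ha)))
  obtain ⟨ex, hxh⟩ := h.hom_agree hAsupp huvA
  obtain ⟨ey, hyh⟩ := h.hom_agree hBsupp huvB
  refine ⟨ex, ey, ?_⟩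
  have hxinv : (h.ι v x).inv = eqToHom ex.symm ≫ (h.ι u x).inv := by
    apply (cancel_epi (h.ι v x).hom).mp
    rw [Iso.hom_inv_id, hxh]
    simp [eqToHom_trans]
  simp only [MCat.act]
  rw [hxinv, hyh]
  simp [eqToHom_trans]
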